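/- Let X be a metric space. For any 0 < α ≤ 1/2, the snowflaked space (X, d^α) satisfies the ⊠-inequalities: for all t, s ∈ [0,1] and all x, y, z, w ∈ X, 0 ≤ (1-t)(1-s) d(x,y)^{2α} + t(1-s) d(y,z)^{2α} + ts d(z,w)^{2α} + (1-t)s d(w,x)^{2α} - t(1-t) d(x,z)^{2α} - s(1-s) d(y,w)^{2α}. -/
import Mathlib

/-- Subadditivity of `rpow` with exponent in `[0,1]` on nonnegative reals. -/
lemma boxineq_rpow_add_le {a b p : ℝ} (ha : 0 ≤ a) (hb : 0 ≤ b) (hp : 0 ≤ p) (hp1 : p ≤ 1) :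
    (a + b) ^ p ≤ a ^ p + b ^ p := by
  have h := NNReal.coe_le_coe.2 (NNReal.rpow_add_le_add_rpow a.toNNReal b.toNNReal hp hp1)
  push_cast [NNReal.coe_rpow, Real.coe_toNNReal _ ha, Real.coe_toNNReal _ hb] at h
  simpa using h

/-- Snowflaked triangle inequality. -/
lemma boxineq_tri {a b c p : ℝ} (ha : 0 ≤ a) (hb : 0 ≤ b) (hc : 0 ≤ c)
    (h : c ≤ a + b) (hp : 0 ≤ p) (hp1 : p ≤ 1) : c ^ p ≤ a ^ p + b ^ p :=
  (Real.rpow_le_rpow hc h hp).trans (boxineq_rpow_add_le ha hb hp hp1)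

/-- Core inequality in the region `0 ≤ t ≤ s ≤ 1/2`. -/
lemma boxineq_core1 (t s A B C E F G : ℝ) (ht0 : 0 ≤ t) (hts : t ≤ s) (hs1 : s ≤ 1/2)
    (hA : 0 ≤ A) (hE : 0 ≤ E)
    (hF1 : F ≤ A + B) (hF2 : F ≤ C + E) (hG1 : G ≤ B + C) (hG2 : G ≤ A + E) :
    0 ≤ (1-t)*(1-s)*A + t*(1-s)*B + t*s*C + (1-t)*s*E - t*(1-t)*F - s*(1-s)*G := by
  have h1 : 0 ≤ (t*(2-t-2*s)/2) * (A+B-F) := by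
    apply mul_nonneg _ (by linarith); nlinarith
  have h2 : 0 ≤ (t*(2*s-t)/2) * (C+E-F) := by
    apply mul_nonneg _ (by linarith); nlinarith
  have h3 : 0 ≤ (t*t/2) * (B+C-G) := by
    apply mul_nonneg (by positivity) (by linarith)
  have h4 : 0 ≤ ((2*s-2*s*s-t*t)/2) * (A+E-G) := by
    apply mul_nonneg _ (by linarith); nlinarith
  have h5 : 0 ≤ (1-t-s)^2 * A := mul_nonneg (sq_nonneg _) hA
  have h6 : 0 ≤ (t-s)^2 * E := mul_nonneg (sq_nonneg _) hE
  nlinarith [h1, h2, h3, h4, h5, h6]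

/-- Core inequality in the region `t, s ≤ 1/2`. -/
lemma boxineq_core2 (t s A B C E F G : ℝ) (ht0 : 0 ≤ t) (ht1 : t ≤ 1/2)
    (hs0 : 0 ≤ s) (hs1 : s ≤ 1/2)
    (hA : 0 ≤ A) (hB : 0 ≤ B) (hC : 0 ≤ C) (hE : 0 ≤ E)
    (hF1 : F ≤ A + B) (hF2 : F ≤ C + E) (hG1 : G ≤ B + C) (hG2 : G ≤ A + E) :
    0 ≤ (1-t)*(1-s)*A + t*(1-s)*B + t*s*C + (1-t)*s*E - t*(1-t)*F - s*(1-s)*G := by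
  rcases le_total t s with h | h
  · exact boxineq_core1 t s A B C E F G ht0 h hs1 hA hE hF1 hF2 hG1 hG2
  · have := boxineq_core1 s t A E C B G F hs0 h ht1 hA hB
      (by linarith) (by linarith) (by linarith) hF1
    linarith

/-- Core inequality in the region `t ≤ 1/2`. -/
lemma boxineq_core3 (t s A B C E F G : ℝ) (ht0 : 0 ≤ t) (ht1 : t ≤ 1/2)
    (hs0 : 0 ≤ s) (hs1 : s ≤ 1)
    (hA : 0 ≤ A) (hB : 0 ≤ B) (hC : 0 ≤ C) (hE : 0 ≤ E)
    (hF1 : F ≤ A + B) (hF2 : F ≤ C + E) (hG1 : G ≤ B + C) (hG2 : G ≤ A + E) :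
    0 ≤ (1-t)*(1-s)*A + t*(1-s)*B + t*s*C + (1-t)*s*E - t*(1-t)*F - s*(1-s)*G := by
  rcases le_total s (1/2) with h | h
  · exact boxineq_core2 t s A B C E F G ht0 ht1 hs0 h hA hB hC hE hF1 hF2 hG1 hG2
  · have := boxineq_core2 t (1-s) E C B A F G ht0 ht1 (by linarith) (by linarith)
      hE hC hB hA (by linarith) (by linarith) (by linarith) (by linarith)
    linarith

/-- Core inequality: the ⊠-inequality follows from the quadrilateral triangle inequalities. -/
lemma boxineq_core (t s A B C E F G : ℝ) (ht0 : 0 ≤ t) (ht1 : t ≤ 1)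
    (hs0 : 0 ≤ s) (hs1 : s ≤ 1)
    (hA : 0 ≤ A) (hB : 0 ≤ B) (hC : 0 ≤ C) (hE : 0 ≤ E)
    (hF1 : F ≤ A + B) (hF2 : F ≤ C + E) (hG1 : G ≤ B + C) (hG2 : G ≤ A + E) :
    0 ≤ (1-t)*(1-s)*A + t*(1-s)*B + t*s*C + (1-t)*s*E - t*(1-t)*F - s*(1-s)*G := by
  rcases le_total t (1/2) with h | h
  · exact boxineq_core3 t s A B C E F G ht0 h hs0 hs1 hA hB hC hE hF1 hF2 hG1 hG2
  · have := boxineq_core3 (1-t) s B A E C F G (by linarith) (by linarith) hs0 hs1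
      hB hA hE hC (by linarith) (by linarith) (by linarith) (by linarith)
    linarith

theorem stmt_0 {X : Type*} [MetricSpace X] (α : ℝ) (hα0 : 0 < α) (hα : α ≤ 1 / 2)
    (t s : ℝ) (ht0 : 0 ≤ t) (ht1 : t ≤ 1) (hs0 : 0 ≤ s) (hs1 : s ≤ 1)
    (x y z w : X) :
    0 ≤ (1 - t) * (1 - s) * dist x y ^ (2 * α) + t * (1 - s) * dist y z ^ (2 * α)
      + t * s * dist z w ^ (2 * α) + (1 - t) * s * dist w x ^ (2 * α)
      - t * (1 - t) * dist x z ^ (2 * α) - s * (1 - s) * dist y w ^ (2 * α) := by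
  have hp : (0:ℝ) ≤ 2 * α := by linarith
  have hp1 : 2 * α ≤ 1 := by linarith
  set A := dist x y ^ (2*α)
  set B := dist y z ^ (2*α)
  set C := dist z w ^ (2*α)
  set E := dist w x ^ (2*α)
  set F := dist x z ^ (2*α)
  set G := dist y w ^ (2*α)
  have hA : 0 ≤ A := Real.rpow_nonneg dist_nonneg _
  have hB : 0 ≤ B := Real.rpow_nonneg dist_nonneg _
  have hC : 0 ≤ C := Real.rpow_nonneg dist_nonneg _
  have hE : 0 ≤ E := Real.rpow_nonneg dist_nonneg _
  have hF1 : F ≤ A + B := boxineq_tri dist_nonneg dist_nonneg dist_nonneg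
    (dist_triangle x y z) hp hp1
  have hF2 : F ≤ C + E := boxineq_tri dist_nonneg dist_nonneg dist_nonneg
    (by rw [dist_comm x z]; exact dist_triangle z w x) hp hp1
  have hG1 : G ≤ B + C := boxineq_tri dist_nonneg dist_nonneg dist_nonneg
    (dist_triangle y z w) hp hp1
  have hG2 : G ≤ A + E := boxineq_tri dist_nonneg dist_nonneg dist_nonneg
    (by rw [dist_comm x y, dist_comm w x]; exact dist_triangle y x w) hp hp1
  have := boxineq_core t s A B C E F G ht0 ht1 hs0 hs1 hA hB hC hE hF1 hF2 hG1 hG2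
  linarith
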